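/- Let g : W → ℝ be bounded and satisfy the G-inequality, and let A ⊆ M be a set with 0 ∈ A such that g(x,y) ≥ 0 whenever x, y ∈ A are distinct. Then there exists a Lipschitz function f : M → ℝ that vanishes on A (in particular f(0) = 0) and satisfies (f(x) − f(y))/d(x,y) ≤ g(x,y) for all (x,y) ∈ W. -/

import Mathlib

/-- `Wt M` is the set `W = {(x,y) ∈ M × M : x ≠ y}`. -/
abbrev Wt (M : Type*) [MetricSpace M] := {p : M × M // p.1 ≠ p.2}

/-- `g : W → ℝ` satisfies the G-inequality. -/
def GIneq {M : Type*} [MetricSpace M] (g : Wt M → ℝ) : Prop :=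
  ∀ (x u y : M) (hxu : x ≠ u) (huy : u ≠ y) (hxy : x ≠ y),
    dist x y * g ⟨(x, y), hxy⟩ ≤ dist x u * g ⟨(x, u), hxu⟩ + dist u y * g ⟨(u, y), huy⟩

theorem stmt6 {M : Type*} [MetricSpace M] (basept : M)
    (h3 : ∃ x y z : M, x ≠ y ∧ x ≠ z ∧ y ≠ z)
    (g : Wt M → ℝ) (hb : ∃ C : ℝ, ∀ p, |g p| ≤ C) (hG : GIneq g)
    (A : Set M) (hA : basept ∈ A)
    (hpos : ∀ (x y : M) (hxy : x ≠ y), x ∈ A → y ∈ A → 0 ≤ g ⟨(x, y), hxy⟩) :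
    ∃ f : M → ℝ, (∃ C : NNReal, LipschitzWith C f) ∧ (∀ x ∈ A, f x = 0) ∧ f basept = 0 ∧
      ∀ p : Wt M, (f p.1.1 - f p.1.2) / dist p.1.1 p.1.2 ≤ g p := by
  classical
  obtain ⟨C, hC⟩ := hb
  obtain ⟨a0, b0, c0, hab0, hac0, hbc0⟩ := h3
  have hC0 : 0 ≤ C := le_trans (abs_nonneg _) (hC ⟨(a0, b0), hab0⟩)
  -- the function h
  set h : M → M → ℝ := fun x y => if hxy : x = y then 0 else dist x y * g ⟨(x, y), hxy⟩
    with hhdef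
  have hdiag : ∀ x, h x x = 0 := fun x => by simp [hhdef]
  have hne : ∀ (x y : M) (hxy : x ≠ y), h x y = dist x y * g ⟨(x, y), hxy⟩ := by
    intro x y hxy; simp [hhdef, hxy]
  have hG' : ∀ (x u y : M), x ≠ u → u ≠ y → x ≠ y → h x y ≤ h x u + h u y := by
    intro x u y hxu huy hxy
    rw [hne x u hxu, hne u y huy, hne x y hxy]
    exact hG x u y hxu huy hxy
  have habs : ∀ x y, |h x y| ≤ C * dist x y := by
    intro x y
    by_cases hxy : x = y
    · subst hxy; simp [hdiag]
    · rw [hne x y hxy, abs_mul, abs_of_nonneg dist_nonneg, mul_comm]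
      exact mul_le_mul_of_nonneg_right (hC _) dist_nonneg
  -- symmetrization lemma, using a third point
  have hS : ∀ x y : M, x ≠ y → 0 ≤ h x y + h y x := by
    intro x y hxy
    have hz : ∃ z : M, z ≠ x ∧ z ≠ y := by
      by_contra hc
      push_neg at hc
      have ha := hc a0; have hb := hc b0; have hcc := hc c0
      by_cases hax : a0 = x <;> by_cases hbx : b0 = x <;> by_cases hcx : c0 = x <;>
        simp_all
    obtain ⟨z, hzx, hzy⟩ := hz
    have h1 := hG' x y z hxy (Ne.symm hzy) (Ne.symm hzx)
    have h2 := hG' z y x hzy (Ne.symm hxy) hzx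
    have h3 := hG' z x y hzx hxy hzy
    have h4 := hG' y x z (Ne.symm hxy) (Ne.symm hzx) (Ne.symm hzy)
    linarith
  -- full triangle inequality
  have htri : ∀ x u y : M, h x y ≤ h x u + h u y := by
    intro x u y
    by_cases hxu : x = u
    · subst hxu; simp [hdiag]
    by_cases huy : u = y
    · subst huy; simp [hdiag]
    by_cases hxy : x = y
    · subst hxy; rw [hdiag]
      exact hS x u hxu
    · exact hG' x u y hxu huy hxy
  -- h is nonnegative on A
  have hposA : ∀ a ∈ A, ∀ b ∈ A, 0 ≤ h a b := by
    intro a ha b hbm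
    by_cases hab : a = b
    · subst hab; simp [hdiag]
    · rw [hne a b hab]
      exact mul_nonneg dist_nonneg (hpos a b hab ha hbm)
  haveI : Nonempty A := ⟨⟨basept, hA⟩⟩
  -- lower bound
  have hlow : ∀ x : M, ∀ a ∈ A, -(C * dist basept x) ≤ h x a := by
    intro x a ha
    by_cases hab : a = basept
    · subst hab
      have := (abs_le.mp (habs x a)).1
      rw [dist_comm a x]
      linarith
    by_cases hxb : x = basept
    · subst hxb
      have := hposA x hA a ha
      simp only [dist_self, mul_zero, neg_zero]
      exact this
    by_cases hxa : x = a
    · subst hxa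
      rw [hdiag]
      have : 0 ≤ C * dist basept x := mul_nonneg hC0 dist_nonneg
      linarith
    · have h1 : h basept a ≤ h basept x + h x a :=
        hG' basept x a (Ne.symm hxb) hxa (fun e => hab e.symm)
      have h2 : 0 ≤ h basept a := hposA basept hA a ha
      have h3 := (abs_le.mp (habs basept x)).2
      linarith
  set f : M → ℝ := fun x => ⨅ a : A, h x a with hfdef
  have hbdd : ∀ x : M, BddBelow (Set.range fun a : A => h x (a : M)) := by
    intro x
    refine ⟨-(C * dist basept x), ?_⟩
    rintro r ⟨a, rfl⟩
    exact hlow x a a.2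
  have hfle : ∀ (x : M) (a : A), f x ≤ h x a := fun x a => ciInf_le (hbdd x) a
  have hfA : ∀ a ∈ A, f a = 0 := by
    intro a ha
    refine le_antisymm ?_ ?_
    · have := hfle a ⟨a, ha⟩
      rwa [hdiag] at this
    · exact le_ciInf fun b => hposA a ha b b.2
  -- key inequality
  have hkey : ∀ x y : M, f x - f y ≤ h x y := by
    intro x y
    have step : ∀ b : A, f x - h x y ≤ h y b := by
      intro b
      have h1 := hfle x b
      have h2 := htri x y b
      linarith
    have := le_ciInf step
    have hfy : f y = ⨅ b : A, h y b := rfl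
    linarith [this]
  refine ⟨f, ⟨⟨C, hC0⟩, ?_⟩, hfA, hfA basept hA, ?_⟩
  · apply LipschitzWith.of_dist_le_mul
    intro x y
    rw [Real.dist_eq]
    show |f x - f y| ≤ C * dist x y
    rw [abs_sub_le_iff]
    constructor
    · have := hkey x y
      have := (abs_le.mp (habs x y)).2
      linarith
    · have := hkey y x
      have := (abs_le.mp (habs y x)).2
      rw [dist_comm y x] at *
      linarith
  · rintro ⟨⟨x, y⟩, hxy⟩
    simp only
    have hd : (0 : ℝ) < dist x y := dist_pos.mpr hxy
    rw [div_le_iff₀ hd]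
    have := hkey x y
    rw [hne x y hxy] at this
    linarith [this]
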